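/- If G is a graph of order n with minimum degree δ ≥ 1, minimum hop degree δ_h ≥ 1, and n < δ·δ_h/(ln δ_h + 1), then γ_{trh}(G) ≤ ((ln δ_h + 1)/δ_h) · n. -/

import Mathlib

open Finset

noncomputable section
open scoped Classical

variable {n : ℕ}

/-- The set of vertices at distance exactly 2 from `i`. -/
def N2 (G : SimpleGraph (Fin n)) (i : Fin n) : Finset (Fin n) :=
  Finset.univ.filter (fun j => G.dist i j = 2)

/-- The neighborhood of `i`. -/
def Nbr (G : SimpleGraph (Fin n)) (i : Fin n) : Finset (Fin n) :=
  Finset.univ.filter (fun j => G.Adj i j)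

/-- Hop degree of a vertex. -/
def hopDeg (G : SimpleGraph (Fin n)) (i : Fin n) : ℕ := (N2 G i).card

/-- Minimum hop degree. -/
def minHopDeg (G : SimpleGraph (Fin n)) : ℕ := ⨅ i, hopDeg G i

/-- Minimum degree. -/
def minDeg (G : SimpleGraph (Fin n)) : ℕ := ⨅ i, (Nbr G i).card

def IsHopDomSet (G : SimpleGraph (Fin n)) (S : Finset (Fin n)) : Prop :=
  ∀ u, u ∉ S → ∃ v ∈ S, G.dist u v = 2

def IsTwoStepDomSet (G : SimpleGraph (Fin n)) (S : Finset (Fin n)) : Prop :=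
  ∀ u : Fin n, ∃ v ∈ S, G.dist u v = 2

def IsRestrainedHopDomSet (G : SimpleGraph (Fin n)) (S : Finset (Fin n)) : Prop :=
  IsHopDomSet G S ∧ ∀ u, u ∉ S → ∃ v, v ∉ S ∧ G.Adj u v

def IsTotalRestrainedHopDomSet (G : SimpleGraph (Fin n)) (S : Finset (Fin n)) : Prop :=
  IsTwoStepDomSet G S ∧ ∀ u, u ∉ S → ∃ v, v ∉ S ∧ G.Adj u v

def IsTwoStepRestrainedDomSet (G : SimpleGraph (Fin n)) (S : Finset (Fin n)) : Prop :=
  IsHopDomSet G S ∧ ∀ u, u ∉ S → ∃ v, v ∉ S ∧ G.dist u v = 2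

def IsTotalTwoStepRestrainedDomSet (G : SimpleGraph (Fin n)) (S : Finset (Fin n)) : Prop :=
  IsTwoStepDomSet G S ∧ ∀ u, u ∉ S → ∃ v, v ∉ S ∧ G.dist u v = 2

def hopDomNum (G : SimpleGraph (Fin n)) : ℕ :=
  sInf {k | ∃ S : Finset (Fin n), IsHopDomSet G S ∧ S.card = k}

def twoStepDomNum (G : SimpleGraph (Fin n)) : ℕ :=
  sInf {k | ∃ S : Finset (Fin n), IsTwoStepDomSet G S ∧ S.card = k}

def rhDomNum (G : SimpleGraph (Fin n)) : ℕ :=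
  sInf {k | ∃ S : Finset (Fin n), IsRestrainedHopDomSet G S ∧ S.card = k}

def trhDomNum (G : SimpleGraph (Fin n)) : ℕ :=
  sInf {k | ∃ S : Finset (Fin n), IsTotalRestrainedHopDomSet G S ∧ S.card = k}

def tsrDomNum (G : SimpleGraph (Fin n)) : ℕ :=
  sInf {k | ∃ S : Finset (Fin n), IsTwoStepRestrainedDomSet G S ∧ S.card = k}

def ttsrDomNum (G : SimpleGraph (Fin n)) : ℕ :=
  sInf {k | ∃ S : Finset (Fin n), IsTotalTwoStepRestrainedDomSet G S ∧ S.card = k}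

/-- The graph `Dist(G;2)` joining vertices at distance exactly 2 in `G`. -/
def dist2Graph (G : SimpleGraph (Fin n)) : SimpleGraph (Fin n) where
  Adj u v := u ≠ v ∧ G.dist u v = 2
  symm := ⟨by
    intro u v h
    exact ⟨h.1.symm, by rw [SimpleGraph.dist_comm]; exact h.2⟩⟩
  loopless := ⟨fun v h => h.1 rfl⟩

def domNum (H : SimpleGraph (Fin n)) : ℕ :=
  sInf {k | ∃ S : Finset (Fin n), (∀ u, u ∉ S → ∃ v ∈ S, H.Adj u v) ∧ S.card = k}

def totalDomNum (H : SimpleGraph (Fin n)) : ℕ :=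
  sInf {k | ∃ S : Finset (Fin n), (∀ u : Fin n, ∃ v ∈ S, H.Adj u v) ∧ S.card = k}

/-- Matching number: maximum number of edges in a matching. -/
def matchingNum (G : SimpleGraph (Fin n)) : ℕ :=
  sSup {k | ∃ M : SimpleGraph.Subgraph G, M.IsMatching ∧ M.edgeSet.ncard = k}

/-- A hop matching: a set of paths of length two, no two of which share an end vertex. -/
def IsHopMatching (G : SimpleGraph (Fin n)) (H : Finset (Fin n × Fin n × Fin n)) : Prop :=
  (∀ t ∈ H, G.Adj t.1 t.2.1 ∧ G.Adj t.2.1 t.2.2 ∧ t.1 ≠ t.2.2) ∧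
  ∀ t ∈ H, ∀ t' ∈ H, t ≠ t' →
    t.1 ≠ t'.1 ∧ t.1 ≠ t'.2.2 ∧ t.2.2 ≠ t'.1 ∧ t.2.2 ≠ t'.2.2

/-- Hop matching number. -/
def hopMatchingNum (G : SimpleGraph (Fin n)) : ℕ :=
  sSup {k | ∃ H : Finset (Fin n × Fin n × Fin n), IsHopMatching G H ∧ H.card = k}

def frh (G : SimpleGraph (Fin n)) (p : Fin n → ℝ) : ℝ :=
  (∑ i, p i) + (∑ i, (1 - p i) * ∏ j ∈ N2 G i, (1 - p j)) +
  ∑ i, (1 - p i) * (1 - (1 - p i) * ∏ j ∈ N2 G i, (1 - p j)) *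
    ∏ j ∈ Nbr G i, (p j + (1 - p j) * ∏ k ∈ N2 G j, (1 - p k))

def f2sr (G : SimpleGraph (Fin n)) (p : Fin n → ℝ) : ℝ :=
  (∑ i, p i) + (∑ i, (1 - p i) * ∏ j ∈ N2 G i, (1 - p j)) +
  ∑ i, (1 - p i) * (1 - (1 - p i) * ∏ j ∈ N2 G i, (1 - p j)) *
    ∏ j ∈ N2 G i, (p j + (1 - p j) * ∏ k ∈ N2 G j, (1 - p k))

def ZSet (G : SimpleGraph (Fin n)) (X : Finset (Fin n)) : Finset (Fin n) :=
  Finset.univ.filter (fun i => i ∉ X ∧ N2 G i ∩ X = ∅)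

def YSet (G : SimpleGraph (Fin n)) (X : Finset (Fin n)) : Finset (Fin n) :=
  Finset.univ.filter (fun i => i ∉ X ∪ ZSet G X ∧ Nbr G i ⊆ X ∪ ZSet G X)

def DSet (G : SimpleGraph (Fin n)) (X : Finset (Fin n)) : Finset (Fin n) :=
  X ∪ ZSet G X ∪ YSet G X


/-- weight of a random subset when each vertex kept with probability p -/
def wt (p : ℝ) (X : Finset (Fin n)) : ℝ :=
  (∏ _i ∈ X, p) * ∏ _i ∈ (univ \ X : Finset (Fin n)), (1 - p)

lemma wt_nonneg {p : ℝ} (hp0 : 0 ≤ p) (hp1 : p ≤ 1) (X : Finset (Fin n)) :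
    0 ≤ wt p X := by
  unfold wt
  apply mul_nonneg <;> apply Finset.prod_nonneg <;> intro i _ <;> linarith

lemma sum_wt_disj (p : ℝ) (A : Finset (Fin n)) :
    ∑ X ∈ univ.powerset.filter (fun X => A ∩ X = ∅), wt p X = (1 - p) ^ A.card := by
  have hset : univ.powerset.filter (fun X : Finset (Fin n) => A ∩ X = ∅)
      = (univ \ A).powerset := by
    ext X
    simp only [Finset.mem_filter, Finset.mem_powerset, Finset.subset_sdiff,
      ← Finset.disjoint_iff_inter_eq_empty]
    constructor
    · rintro ⟨h1, h2⟩; exact ⟨h1, h2.symm⟩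
    · rintro ⟨h1, h2⟩; exact ⟨h1, h2.symm⟩
  rw [hset]
  have key : ∀ X ∈ (univ \ A : Finset (Fin n)).powerset,
      wt p X = (1 - p) ^ A.card * ((∏ _i ∈ X, p) * ∏ _i ∈ (univ \ A) \ X, (1 - p)) := by
    intro X hX
    rw [Finset.mem_powerset] at hX
    have hdisj : Disjoint A ((univ \ A) \ X) :=
      (Finset.sdiff_disjoint.symm).mono_right (Finset.sdiff_subset)
    have hunion : (univ \ X : Finset (Fin n)) = A ∪ ((univ \ A) \ X) := by
      ext i
      simp only [Finset.mem_sdiff, Finset.mem_union, Finset.mem_univ, true_and]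
      have h : i ∈ A → i ∉ X := fun hA hx =>
        Finset.disjoint_left.mp (Disjoint.symm (Finset.subset_sdiff.mp hX).2) hA hx
      tauto
    unfold wt
    rw [hunion, Finset.prod_union hdisj]
    simp only [Finset.prod_const]
    ring
  rw [Finset.sum_congr rfl key, ← Finset.mul_sum]
  have : ∑ X ∈ (univ \ A : Finset (Fin n)).powerset,
      (∏ _i ∈ X, p) * ∏ _i ∈ (univ \ A) \ X, (1 - p) = 1 := by
    rw [← Finset.prod_add]; simp
  rw [this, mul_one]

lemma sum_wt_total (p : ℝ) :
    ∑ X ∈ (univ : Finset (Fin n)).powerset, wt p X = 1 := by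
  have := sum_wt_disj p (∅ : Finset (Fin n))
  simpa using this

lemma sum_wt_mem (p : ℝ) (i : Fin n) :
    ∑ X ∈ univ.powerset.filter (fun X => i ∈ X), wt p X = p := by
  have h1 := sum_wt_total (n := n) p
  rw [← Finset.sum_filter_add_sum_filter_not (univ.powerset)
    (fun X : Finset (Fin n) => i ∈ X) (wt p)] at h1
  have h2 : (univ.powerset.filter (fun X : Finset (Fin n) => ¬ i ∈ X))
      = univ.powerset.filter (fun X => ({i} : Finset (Fin n)) ∩ X = ∅) := by
    apply Finset.filter_congr
    intro X _
    simp [Finset.eq_empty_iff_forall_notMem]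
  rw [h2, sum_wt_disj p ({i} : Finset (Fin n))] at h1
  rw [Finset.card_singleton, pow_one] at h1
  linarith

lemma exists_le_expectation {p : ℝ} (hp0 : 0 ≤ p) (hp1 : p ≤ 1) (f : Finset (Fin n) → ℝ) :
    ∃ X, f X ≤ ∑ X ∈ (univ : Finset (Fin n)).powerset, wt p X * f X := by
  obtain ⟨X0, hX0, hmin⟩ := Finset.exists_min_image (univ : Finset (Fin n)).powerset f
    ⟨∅, Finset.empty_mem_powerset _⟩
  refine ⟨X0, ?_⟩
  calc f X0 = (∑ X ∈ (univ : Finset (Fin n)).powerset, wt p X) * f X0 := by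
        rw [sum_wt_total, one_mul]
    _ = ∑ X ∈ (univ : Finset (Fin n)).powerset, wt p X * f X0 := by rw [Finset.sum_mul]
    _ ≤ ∑ X ∈ (univ : Finset (Fin n)).powerset, wt p X * f X :=
        Finset.sum_le_sum (fun X hX => mul_le_mul_of_nonneg_left (hmin X hX) (wt_nonneg hp0 hp1 X))

lemma exp_card (p : ℝ) :
    ∑ X ∈ (univ : Finset (Fin n)).powerset, wt p X * (X.card : ℝ) = n * p := by
  have h : ∀ X ∈ (univ : Finset (Fin n)).powerset,
      wt p X * (X.card : ℝ) = ∑ i : Fin n, if i ∈ X then wt p X else 0 := by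
    intro X hX
    rw [Finset.sum_ite_mem, Finset.univ_inter, Finset.sum_const, nsmul_eq_mul, mul_comm]
  rw [Finset.sum_congr rfl h, Finset.sum_comm]
  have h2 : ∀ i : Fin n,
      (∑ X ∈ (univ : Finset (Fin n)).powerset, if i ∈ X then wt p X else 0) = p := by
    intro i
    rw [← Finset.sum_filter]
    exact sum_wt_mem p i
  rw [Finset.sum_congr rfl (fun i _ => h2 i), Finset.sum_const, Finset.card_univ,
    Fintype.card_fin, nsmul_eq_mul]

lemma exp_Y (p : ℝ) (N : Fin n → Finset (Fin n)) :
    ∑ X ∈ (univ : Finset (Fin n)).powerset,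
      wt p X * (((univ.filter (fun i => N i ∩ X = ∅)).card : ℝ))
    = ∑ i : Fin n, (1 - p) ^ (N i).card := by
  have h : ∀ X ∈ (univ : Finset (Fin n)).powerset,
      wt p X * (((univ.filter (fun i => N i ∩ X = ∅)).card : ℝ))
        = ∑ i : Fin n, if N i ∩ X = ∅ then wt p X else 0 := by
    intro X hX
    rw [Finset.card_filter, Nat.cast_sum, Finset.mul_sum]
    refine Finset.sum_congr rfl (fun i _ => ?_)
    split <;> simp
  rw [Finset.sum_congr rfl h, Finset.sum_comm]
  refine Finset.sum_congr rfl (fun i _ => ?_)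
  rw [← Finset.sum_filter]
  exact sum_wt_disj p (N i)

theorem stmt11 {n : ℕ} (G : SimpleGraph (Fin n)) (hδ : 1 ≤ minDeg G)
    (hδh : 1 ≤ minHopDeg G)
    (hn : (n : ℝ) < (minDeg G) * (minHopDeg G) / (Real.log (minHopDeg G) + 1)) :
    (trhDomNum G : ℝ) ≤
      (Real.log (minHopDeg G) + 1) / (minHopDeg G) * n := by
  set d := minDeg G with hd
  set dh := minHopDeg G with hdh
  have hdh1 : (1:ℝ) ≤ dh := by exact_mod_cast hδh
  have hdh0 : (0:ℝ) < dh := lt_of_lt_of_le one_pos hdh1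
  have hlog0 : 0 ≤ Real.log dh := Real.log_nonneg hdh1
  set p : ℝ := Real.log dh / dh with hp
  have hp0 : 0 ≤ p := div_nonneg hlog0 hdh0.le
  have hp1 : p ≤ 1 := by
    rw [hp, div_le_one hdh0]
    have := Real.log_le_sub_one_of_pos hdh0
    linarith
  have h1p0 : 0 ≤ 1 - p := by linarith
  have h1p1 : 1 - p ≤ 1 := by linarith
  -- per-vertex bound on (1-p)^(hopDeg)
  have hpow : ∀ i : Fin n, (1 - p) ^ (hopDeg G i) ≤ ((dh:ℝ))⁻¹ := by
    intro i
    have hge : dh ≤ hopDeg G i := ciInf_le (OrderBot.bddBelow _) i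
    have h1 : (1 - p) ^ (hopDeg G i) ≤ (1 - p) ^ dh :=
      pow_le_pow_of_le_one h1p0 h1p1 hge
    have h2 : (1 - p) ^ dh ≤ Real.exp (-p) ^ dh := by
      apply pow_le_pow_left₀ h1p0
      have := Real.add_one_le_exp (-p)
      linarith
    have h3 : Real.exp (-p) ^ dh = ((dh:ℝ))⁻¹ := by
      rw [← Real.exp_nat_mul]
      have : (dh:ℝ) * (-p) = - Real.log dh := by
        rw [hp]; field_simp
      rw [this, Real.exp_neg, Real.exp_log hdh0]
    calc (1 - p) ^ (hopDeg G i) ≤ (1 - p) ^ dh := h1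
      _ ≤ Real.exp (-p) ^ dh := h2
      _ = ((dh:ℝ))⁻¹ := h3
  -- expectation bound
  have hE : ∑ X ∈ (univ : Finset (Fin n)).powerset,
      wt p X * ((X.card : ℝ) + ((univ.filter (fun i => N2 G i ∩ X = ∅)).card : ℝ))
      ≤ (Real.log dh + 1) / dh * n := by
    have hsplit : ∑ X ∈ (univ : Finset (Fin n)).powerset,
        wt p X * ((X.card : ℝ) + ((univ.filter (fun i => N2 G i ∩ X = ∅)).card : ℝ))
        = n * p + ∑ i : Fin n, (1 - p) ^ ((N2 G i).card) := by
      have : ∀ X ∈ (univ : Finset (Fin n)).powerset,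
          wt p X * ((X.card : ℝ) + ((univ.filter (fun i => N2 G i ∩ X = ∅)).card : ℝ))
          = wt p X * (X.card : ℝ)
            + wt p X * ((univ.filter (fun i => N2 G i ∩ X = ∅)).card : ℝ) := by
        intro X _; ring
      rw [Finset.sum_congr rfl this, Finset.sum_add_distrib, exp_card p,
        exp_Y p (fun i => N2 G i)]
    rw [hsplit]
    have hsum : ∑ i : Fin n, (1 - p) ^ ((N2 G i).card) ≤ (n : ℝ) * ((dh:ℝ))⁻¹ := by
      calc ∑ i : Fin n, (1 - p) ^ ((N2 G i).card)
          ≤ ∑ _i : Fin n, ((dh:ℝ))⁻¹ :=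
            Finset.sum_le_sum (fun i _ => hpow i)
        _ = (n : ℝ) * ((dh:ℝ))⁻¹ := by
            rw [Finset.sum_const, Finset.card_univ, Fintype.card_fin, nsmul_eq_mul]
    have : (n:ℝ) * p + (n : ℝ) * ((dh:ℝ))⁻¹ = (Real.log dh + 1) / dh * n := by
      rw [hp]; field_simp
    linarith
  -- choose a good set X
  obtain ⟨X, hX⟩ := exists_le_expectation hp0 hp1
    (fun X => (X.card : ℝ) + ((univ.filter (fun i => N2 G i ∩ X = ∅)).card : ℝ))
  set Y := univ.filter (fun i => N2 G i ∩ X = ∅) with hY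
  have hXval : (X.card : ℝ) + (Y.card : ℝ) ≤ (Real.log dh + 1) / dh * n :=
    le_trans hX hE
  -- each vertex has a vertex at distance 2
  have hN2ne : ∀ i : Fin n, (N2 G i).Nonempty := by
    intro i
    have h1 : 1 ≤ hopDeg G i := le_trans hδh (ciInf_le (OrderBot.bddBelow _) i)
    exact Finset.card_pos.mp h1
  set c : Fin n → Fin n := fun i => (hN2ne i).choose with hcdef
  have hc : ∀ i, c i ∈ N2 G i := fun i => (hN2ne i).choose_spec
  set D := X ∪ Y.image c with hDdef
  have hDcard : (D.card : ℝ) ≤ (Real.log dh + 1) / dh * n := by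
    have h1 : D.card ≤ X.card + (Y.image c).card := Finset.card_union_le _ _
    have h2 : (Y.image c).card ≤ Y.card := Finset.card_image_le
    have : (D.card : ℝ) ≤ (X.card : ℝ) + (Y.card : ℝ) := by
      push_cast
      exact_mod_cast le_trans h1 (Nat.add_le_add_left h2 _)
    linarith
  -- bound against minimum degree
  have hfrac : 0 < (Real.log dh + 1) / dh := by positivity
  have hRd : (Real.log dh + 1) / dh * (n:ℝ) < d := by
    calc (Real.log dh + 1) / dh * (n:ℝ)
        < (Real.log dh + 1) / dh * ((d:ℝ) * dh / (Real.log dh + 1)) :=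
          mul_lt_mul_of_pos_left hn hfrac
      _ = d := by
          field_simp
  have hDd : D.card < d := by
    have : (D.card : ℝ) < (d : ℝ) := lt_of_le_of_lt hDcard hRd
    exact_mod_cast this
  -- D is a total restrained hop dominating set
  have hDdom : IsTotalRestrainedHopDomSet G D := by
    constructor
    · intro u
      by_cases hu : N2 G u ∩ X = ∅
      · have huY : u ∈ Y := by rw [hY]; simp [hu]
        refine ⟨c u, Finset.mem_union_right _ (Finset.mem_image_of_mem c huY), ?_⟩
        have := hc u
        simpa [N2] using this
      · obtain ⟨v, hv⟩ := Finset.nonempty_iff_ne_empty.mpr hu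
        rw [Finset.mem_inter] at hv
        exact ⟨v, Finset.mem_union_left _ hv.2, by simpa [N2] using hv.1⟩
    · intro u hu
      have hdu : d ≤ (Nbr G u).card := ciInf_le (OrderBot.bddBelow _) u
      have hcard : D.card < (Nbr G u).card := lt_of_lt_of_le hDd hdu
      have hns : ¬ (Nbr G u ⊆ D) := fun hsub =>
        absurd (Finset.card_le_card hsub) (not_le.mpr hcard)
      obtain ⟨v, hvN, hvD⟩ := Finset.not_subset.mp hns
      exact ⟨v, hvD, by simpa [Nbr] using hvN⟩
  have htrh : trhDomNum G ≤ D.card := Nat.sInf_le ⟨D, hDdom, rfl⟩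
  calc (trhDomNum G : ℝ) ≤ (D.card : ℝ) := by exact_mod_cast htrh
    _ ≤ (Real.log dh + 1) / dh * n := hDcard
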